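/- Let R be a discrete valuation ring with fraction field L and residue field k, let Γ be a group, and let ρ₁, ρ₂ : Γ → GL_r(R) be two representations such that the reduction of ρ₁ modulo the maximal ideal is irreducible over k. If ρ₁ and ρ₂ become conjugate by an element of GL_r(L), then they are conjugate by an element of GL_r(R). -/

import Mathlib

theorem stmt_1
    (R : Type*) [CommRing R] [IsDomain R] [IsDiscreteValuationRing R]
    (L : Type*) [Field L] [Algebra R L] [IsFractionRing R L]
    (Γ : Type*) [Group Γ] (r : ℕ)
    (ρ₁ ρ₂ : Γ →* GL (Fin r) R)
    (hirr : ∀ W : Submodule (IsLocalRing.ResidueField R)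
        (Fin r → IsLocalRing.ResidueField R),
      (∀ γ : Γ, ∀ x ∈ W,
        ((ρ₁ γ : Matrix (Fin r) (Fin r) R).map (IsLocalRing.residue R)).mulVec x ∈ W) →
      W = ⊥ ∨ W = ⊤)
    (g : GL (Fin r) L)
    (hconj : ∀ γ : Γ,
      g * Units.map (RingHom.mapMatrix (algebraMap R L)).toMonoidHom (ρ₁ γ) * g⁻¹ =
        Units.map (RingHom.mapMatrix (algebraMap R L)).toMonoidHom (ρ₂ γ)) :
    ∃ h : GL (Fin r) R, ∀ γ : Γ, h * ρ₁ γ * h⁻¹ = ρ₂ γ := by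
  classical
  rcases Nat.eq_zero_or_pos r with hr | hr
  · subst hr
    exact ⟨1, fun γ => Units.ext (Subsingleton.elim _ _)⟩
  have : Nonempty (Fin r) := ⟨⟨0, hr⟩⟩
  have inj : Function.Injective (algebraMap R L) := IsFractionRing.injective R L
  -- matrix-level intertwining over L
  have hgL : ∀ γ : Γ, (g : Matrix (Fin r) (Fin r) L) * ((ρ₁ γ : Matrix (Fin r) (Fin r) R).map (algebraMap R L))
      = ((ρ₂ γ : Matrix (Fin r) (Fin r) R).map (algebraMap R L)) * (g : Matrix (Fin r) (Fin r) L) := by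
    intro γ
    have h2 : g * Units.map (RingHom.mapMatrix (algebraMap R L)).toMonoidHom (ρ₁ γ)
        = Units.map (RingHom.mapMatrix (algebraMap R L)).toMonoidHom (ρ₂ γ) * g := by
      rw [← hconj γ]; group
    exact congrArg Units.val h2
  -- clear denominators
  obtain ⟨b, hb⟩ := IsLocalization.exist_integer_multiples (nonZeroDivisors R)
      Finset.univ (fun p : Fin r × Fin r => (g : Matrix (Fin r) (Fin r) L) p.1 p.2)
  have hb' : ∀ p : Fin r × Fin r, ∃ y : R,
      algebraMap R L y = (b : R) • (g : Matrix (Fin r) (Fin r) L) p.1 p.2 :=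
    fun p => hb p (Finset.mem_univ p)
  choose N hN using hb'
  -- N is not identically zero
  have hbL : algebraMap R L (b : R) ≠ 0 := fun h =>
    nonZeroDivisors.coe_ne_zero b (inj (by simpa using h))
  have hgne : (g : Matrix (Fin r) (Fin r) L) ≠ 0 := by
    intro h0
    have h1 : (1 : Matrix (Fin r) (Fin r) L) = 0 := by
      calc (1 : Matrix (Fin r) (Fin r) L) = (g : Matrix (Fin r) (Fin r) L) * ↑g⁻¹ := by
            rw [← Units.val_mul, mul_inv_cancel]; rfl
        _ = 0 := by rw [h0, zero_mul]
    exact one_ne_zero h1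
  -- the ideal generated by the entries of N, and its generator d
  set J : Ideal R := Ideal.span (Set.range N) with hJ
  have hprinc : J.IsPrincipal := IsPrincipalIdealRing.principal J
  set d : R := Submodule.IsPrincipal.generator J with hd
  have hspan : Ideal.span {d} = J := Submodule.IsPrincipal.span_singleton_generator J
  have hNd : ∀ p, d ∣ N p := by
    intro p
    have : N p ∈ J := Ideal.subset_span ⟨p, rfl⟩
    rw [← hspan] at this
    exact Ideal.mem_span_singleton.mp this
  choose M hM using hNd
  have hd0 : d ≠ 0 := by
    intro h0
    have hJbot : J = ⊥ := by rw [← hspan, h0, Ideal.span_singleton_eq_bot]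
    have : ∀ p : Fin r × Fin r, N p = 0 := by
      intro p
      have : N p ∈ J := Ideal.subset_span ⟨p, rfl⟩
      rwa [hJbot, Ideal.mem_bot] at this
    apply hgne
    ext i j
    have h1 := hN (i, j)
    rw [this (i, j), map_zero] at h1
    have h2 : algebraMap R L (b : R) * (g : Matrix (Fin r) (Fin r) L) i j = 0 := by
      rw [← Algebra.smul_def]; exact h1.symm
    simp only [Matrix.zero_apply]
    exact (mul_eq_zero.mp h2).resolve_left hbL
  -- some quotient M p is a unit mod the maximal ideal
  have hdmem : d ∈ J := Submodule.IsPrincipal.generator_mem J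
  obtain ⟨c, hc⟩ := (Submodule.mem_span_range_iff_exists_fun R).mp (hJ ▸ hdmem)
  have hsum1 : ∑ p : Fin r × Fin r, c p * M p = 1 := by
    have h1 : d * (∑ p : Fin r × Fin r, c p * M p) = d := by
      rw [Finset.mul_sum]
      calc ∑ p : Fin r × Fin r, d * (c p * M p)
          = ∑ p : Fin r × Fin r, c p • N p := by
            refine Finset.sum_congr rfl fun p _ => ?_
            rw [hM p, smul_eq_mul]; ring
        _ = d := hc
    exact mul_left_cancel₀ hd0 (h1.trans (mul_one d).symm)
  have hMne : ∃ p : Fin r × Fin r, IsLocalRing.residue R (M p) ≠ 0 := by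
    by_contra hall
    push_neg at hall
    have : (1 : IsLocalRing.ResidueField R) = 0 := by
      calc (1 : IsLocalRing.ResidueField R)
          = IsLocalRing.residue R (∑ p : Fin r × Fin r, c p * M p) := by rw [hsum1]; rfl
        _ = ∑ p : Fin r × Fin r, IsLocalRing.residue R (c p) * IsLocalRing.residue R (M p) := by
            rw [map_sum]; exact Finset.sum_congr rfl fun p _ => map_mul _ _ _
        _ = 0 := by simp [hall]
    exact one_ne_zero this
  -- the matrix over R
  set A : Matrix (Fin r) (Fin r) R := Matrix.of fun i j => M (i, j) with hA
  -- relation : algebraMap b • g = algebraMap d • A.map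
  have hkey : (algebraMap R L (b : R)) • (g : Matrix (Fin r) (Fin r) L)
      = (algebraMap R L d) • (A.map (algebraMap R L)) := by
    ext i j
    have := hN (i, j)
    rw [hM (i, j)] at this
    simp only [Matrix.smul_apply, Matrix.map_apply, hA, Matrix.of_apply, smul_eq_mul]
    rw [← map_mul, this, Algebra.smul_def]
  -- intertwining over R
  have hAR : ∀ γ : Γ, A * (ρ₁ γ : Matrix (Fin r) (Fin r) R)
      = (ρ₂ γ : Matrix (Fin r) (Fin r) R) * A := by
    intro γ
    have hdL : algebraMap R L d ≠ 0 := fun h => hd0 (inj (by simpa using h))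
    have hmapped : (A * (ρ₁ γ : Matrix (Fin r) (Fin r) R)).map (algebraMap R L)
        = ((ρ₂ γ : Matrix (Fin r) (Fin r) R) * A).map (algebraMap R L) := by
      rw [Matrix.map_mul, Matrix.map_mul]
      have h1 : (algebraMap R L d) • (A.map (algebraMap R L)
            * ((ρ₁ γ : Matrix (Fin r) (Fin r) R).map (algebraMap R L)))
          = (algebraMap R L d) • (((ρ₂ γ : Matrix (Fin r) (Fin r) R).map (algebraMap R L))
            * A.map (algebraMap R L)) := by
        rw [← smul_mul_assoc, ← hkey, smul_mul_assoc, hgL γ, ← mul_smul_comm, hkey,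
          mul_smul_comm]
      exact smul_right_injective _ hdL h1
    ext i j
    exact inj (by simpa using congrFun (congrFun hmapped i) j)
  -- reduce mod the maximal ideal
  set res := IsLocalRing.residue R with hres
  set Abar : Matrix (Fin r) (Fin r) (IsLocalRing.ResidueField R) := A.map res with hAbar
  have hAk : ∀ γ : Γ, Abar * ((ρ₁ γ : Matrix (Fin r) (Fin r) R).map res)
      = ((ρ₂ γ : Matrix (Fin r) (Fin r) R).map res) * Abar := by
    intro γ
    have := congrArg (Matrix.map · (res : R →+* IsLocalRing.ResidueField R)) (hAR γ)
    simpa [Matrix.map_mul] using this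
  -- kernel of Abar is invariant, hence ⊥
  set W : Submodule (IsLocalRing.ResidueField R) (Fin r → IsLocalRing.ResidueField R) :=
    LinearMap.ker (Matrix.mulVecLin Abar) with hW
  have hWinv : ∀ γ : Γ, ∀ x ∈ W,
      ((ρ₁ γ : Matrix (Fin r) (Fin r) R).map res).mulVec x ∈ W := by
    intro γ x hx
    have hx0 : Abar.mulVec x = 0 := hx
    show Abar.mulVec (((ρ₁ γ : Matrix (Fin r) (Fin r) R).map res).mulVec x) = 0
    rw [Matrix.mulVec_mulVec, hAk γ, ← Matrix.mulVec_mulVec, hx0, Matrix.mulVec_zero]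
  have hWne : W ≠ ⊤ := by
    intro htop
    obtain ⟨p, hp⟩ := hMne
    have hx : Abar.mulVec (Pi.single p.2 1) = 0 := by
      have : (Pi.single p.2 1 : Fin r → IsLocalRing.ResidueField R) ∈ W := htop ▸ trivial
      exact this
    have := congrFun hx p.1
    rw [Matrix.mulVec_single] at this
    simp only [mul_one, Pi.zero_apply] at this
    exact hp (by simpa [hAbar, hA] using this)
  have hWbot : W = ⊥ := (hirr W hWinv).resolve_right hWne
  -- Abar invertible, hence A invertible
  have hinjbar : Function.Injective Abar.mulVec := by
    have := LinearMap.ker_eq_bot.mp hWbot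
    intro x y hxy
    exact this (by simpa [Matrix.mulVecLin_apply] using hxy)
  have hUbar : IsUnit Abar := Matrix.mulVec_injective_iff_isUnit.mp hinjbar
  have hdetbar : IsUnit Abar.det := (Matrix.isUnit_iff_isUnit_det Abar).mp hUbar
  have hdetA : IsUnit A.det := by
    rw [← IsLocalRing.residue_ne_zero_iff_isUnit]
    have : Abar.det = res A.det := ((res : R →+* IsLocalRing.ResidueField R).map_det A).symm
    rw [← this]
    exact hdetbar.ne_zero
  have hU : IsUnit A := (Matrix.isUnit_iff_isUnit_det A).mpr hdetA
  refine ⟨hU.unit, fun γ => ?_⟩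
  have hk : hU.unit * ρ₁ γ = ρ₂ γ * hU.unit := by
    apply Units.ext
    simpa [IsUnit.unit_spec] using hAR γ
  rw [hk, mul_assoc, mul_inv_cancel, mul_one]
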